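/- Let K be a field, H11 an n1×m1 matrix and H21 an n2×m1 matrix over K such that the (n1+n2)×m1 vertically stacked matrix [H11; H21] has full column rank m1. If V20 is a matrix whose columns form a basis of the kernel of H21, then rank(H11 · V20) = m1 − rank(H21). -/

import Mathlib

open Matrix

/-- If the stacked matrix [H11; H21] has full column rank m1 and the columns of V20 form a basis
of the null space of H21, then rank(H11 · V20) = m1 − rank(H21). -/
theorem rank_mul_kernelBasis {K : Type*} [Field K] {n1 n2 m1 d2 : ℕ}
    (H11 : Matrix (Fin n1) (Fin m1) K) (H21 : Matrix (Fin n2) (Fin m1) K)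
    (hfull : (Matrix.fromRows H11 H21).rank = m1)
    (V20 : Matrix (Fin m1) (Fin d2) K)
    (hV20li : LinearIndependent K (fun j => V20ᵀ j))
    (hV20span : Submodule.span K (Set.range (fun j => V20ᵀ j)) =
      LinearMap.ker (Matrix.mulVecLin H21)) :
    (H11 * V20).rank = m1 - H21.rank := by
  classical
  -- finrank of kernel of H21 is d2
  have hker : Module.finrank K (LinearMap.ker H21.mulVecLin) = d2 := by
    rw [← hV20span, finrank_span_eq_card hV20li, Fintype.card_fin]
  -- rank-nullity for H21
  have hrn : H21.rank + d2 = m1 := by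
    have h := LinearMap.finrank_range_add_finrank_ker H21.mulVecLin
    rw [hker, Module.finrank_fintype_fun_eq_card, Fintype.card_fin] at h
    simpa [Matrix.rank] using h
  -- injectivity of the stacked matrix
  have hstinj : Function.Injective (Matrix.fromRows H11 H21).mulVecLin := by
    rw [← LinearMap.ker_eq_bot]
    have h := LinearMap.finrank_range_add_finrank_ker (Matrix.fromRows H11 H21).mulVecLin
    rw [show Module.finrank K (LinearMap.range (Matrix.fromRows H11 H21).mulVecLin) = m1
        from hfull, Module.finrank_fintype_fun_eq_card, Fintype.card_fin] at h
    have : Module.finrank K (LinearMap.ker (Matrix.fromRows H11 H21).mulVecLin) = 0 := by omega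
    exact Submodule.finrank_eq_zero.mp this
  -- injectivity of V20
  have hV20inj : Function.Injective V20.mulVecLin := by
    exact Matrix.mulVec_injective_iff.mpr hV20li
  -- injectivity of H11 * V20
  have hinj : Function.Injective (H11 * V20).mulVecLin := by
    rw [← LinearMap.ker_eq_bot, Submodule.eq_bot_iff]
    intro x hx
    rw [LinearMap.mem_ker, Matrix.mulVecLin_mul, LinearMap.comp_apply] at hx
    have hmem : V20.mulVecLin x ∈ LinearMap.ker H21.mulVecLin := by
      rw [← hV20span]
      have : V20.mulVecLin x ∈ LinearMap.range V20.mulVecLin := ⟨x, rfl⟩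
      rwa [Matrix.range_mulVecLin] at this
    have h21 : H21.mulVecLin (V20.mulVecLin x) = 0 := hmem
    have hzero : (Matrix.fromRows H11 H21).mulVecLin (V20.mulVecLin x) = 0 := by
      simp only [Matrix.mulVecLin_apply] at hx h21 ⊢
      rw [Matrix.fromRows_mulVec, hx, h21]
      simp
    have : V20.mulVecLin x = 0 := by
      apply hstinj; rw [hzero, map_zero]
    have : x = 0 := by apply hV20inj; rw [this, map_zero]
    exact this
  -- conclude
  rw [Matrix.rank, LinearMap.finrank_range_of_inj hinj,
    Module.finrank_fintype_fun_eq_card, Fintype.card_fin]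
  omega
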